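/- arXiv:2105.03213 — 4 statements merged into one kernel-verified Lean document; each statement's English description precedes it below -/
import Mathlib

section
/- Fix n ∈ ℕ. Let J be a nonempty finite type and let a, b, c, d : J → ℝ be a facet representation of 𝒫_n, i.e. suppose that for all v = (v₁,v₂,v₃) ∈ ℝ³, v ∈ 𝒫_n if and only if a j · v₁ + b j · v₂ + c j · v₃ ≤ d j for all j ∈ J. Let S = {j ∈ J : c j > 0} and for j ∈ S define h_j(x₁,x₂) = (d j − a j · x₁ − b j · x₂) / c j. Then S is nonempty, and for every x = (x₁,x₂) ∈ [0,1]², the minimum over j ∈ S of h_j(x₁,x₂) equals f_n(x) = sSup {z ∈ ℝ : (x₁, x₂, z) ∈ 𝒫_n}. -/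
/-- The grid `G_n = {k / 2^n : k ∈ ℕ, k ≤ 2^n} ⊆ [0,1]`. -/
def latticeG (n : ℕ) : Set ℝ := {x : ℝ | ∃ k : ℕ, k ≤ 2 ^ n ∧ x = (k : ℝ) / 2 ^ n}

/-- The convex polytope `𝒫_n`: the convex hull of the `n`-th order lattice of
`f(x₁,x₂) = √(x₁x₂)` together with the `n`-th order lattice of the zero function. -/
noncomputable def polyP (n : ℕ) : Set (ℝ × ℝ × ℝ) :=
  convexHull ℝ
    {v : ℝ × ℝ × ℝ | ∃ a b : ℝ, a ∈ latticeG n ∧ b ∈ latticeG n ∧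
      (v = (a, b, Real.sqrt (a * b)) ∨ v = (a, b, 0))}

/-- The upper envelope `f_n(x) = sSup {z : (x₁, x₂, z) ∈ 𝒫_n}`. -/
noncomputable def fApprox (n : ℕ) (x : ℝ × ℝ) : ℝ :=
  sSup {z : ℝ | (x.1, x.2, z) ∈ polyP n}


lemma zero_mem_latticeG (n : ℕ) : (0:ℝ) ∈ latticeG n := ⟨0, by positivity, by simp⟩

lemma one_mem_latticeG (n : ℕ) : (1:ℝ) ∈ latticeG n :=
  ⟨2 ^ n, le_refl _, by push_cast; rw [div_self]; positivity⟩

lemma latticeG_mem_Icc {n : ℕ} {x : ℝ} (hx : x ∈ latticeG n) : x ∈ Set.Icc (0:ℝ) 1 := by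
  obtain ⟨k, hk, rfl⟩ := hx
  constructor
  · positivity
  · rw [div_le_one (by positivity)]
    exact_mod_cast hk

lemma corner_mem_polyP {n : ℕ} {x y : ℝ} (hx : x ∈ latticeG n) (hy : y ∈ latticeG n) :
    ((x, y, 0) : ℝ × ℝ × ℝ) ∈ polyP n :=
  subset_convexHull ℝ _ ⟨x, y, hx, hy, Or.inr rfl⟩

lemma base_mem_polyP {n : ℕ} {x₁ x₂ : ℝ} (hx₁ : x₁ ∈ Set.Icc (0:ℝ) 1)
    (hx₂ : x₂ ∈ Set.Icc (0:ℝ) 1) : ((x₁, x₂, 0) : ℝ × ℝ × ℝ) ∈ polyP n := by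
  have hC : Convex ℝ (polyP n) := convex_convexHull ℝ _
  have h00 := corner_mem_polyP (n := n) (zero_mem_latticeG n) (zero_mem_latticeG n)
  have h10 := corner_mem_polyP (n := n) (one_mem_latticeG n) (zero_mem_latticeG n)
  have h01 := corner_mem_polyP (n := n) (zero_mem_latticeG n) (one_mem_latticeG n)
  have h11 := corner_mem_polyP (n := n) (one_mem_latticeG n) (one_mem_latticeG n)
  have hA : ((x₁, 0, 0) : ℝ × ℝ × ℝ) ∈ polyP n := by
    have := hC (a := 1 - x₁) (b := x₁) h00 h10 (by linarith [hx₁.2]) hx₁.1 (by ring)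
    simpa [Prod.ext_iff] using this
  have hB : ((x₁, 1, 0) : ℝ × ℝ × ℝ) ∈ polyP n := by
    have := hC (a := 1 - x₁) (b := x₁) h01 h11 (by linarith [hx₁.2]) hx₁.1 (by ring)
    simpa [Prod.ext_iff] using this
  have h := hC (a := 1 - x₂) (b := x₂) hA hB (by linarith [hx₂.2]) hx₂.1 (by ring)
  have he : (1 - x₂) • ((x₁, 0, 0) : ℝ × ℝ × ℝ) + x₂ • (x₁, 1, 0) = (x₁, x₂, 0) := by
    simp [Prod.ext_iff]; ring
  rwa [he] at h

lemma polyP_le_one {n : ℕ} {v : ℝ × ℝ × ℝ} (hv : v ∈ polyP n) : v.2.2 ≤ 1 := by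
  have hconv : Convex ℝ {v : ℝ × ℝ × ℝ | v.2.2 ≤ 1} := by
    intro u hu w hw s t hs ht hst
    simp only [Set.mem_setOf_eq] at *
    have : (s • u + t • w).2.2 = s * u.2.2 + t * w.2.2 := rfl
    rw [this]
    nlinarith
  have hsub : {v : ℝ × ℝ × ℝ | ∃ a b : ℝ, a ∈ latticeG n ∧ b ∈ latticeG n ∧
      (v = (a, b, Real.sqrt (a * b)) ∨ v = (a, b, 0))} ⊆ {v | v.2.2 ≤ 1} := by
    rintro w ⟨p, q, hp, hq, hw | hw⟩ <;> subst hw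
    · have hp' := latticeG_mem_Icc hp
      have hq' := latticeG_mem_Icc hq
      show Real.sqrt (p * q) ≤ 1
      rw [show (1:ℝ) = Real.sqrt 1 by simp]
      exact Real.sqrt_le_sqrt (by nlinarith [hp'.1, hp'.2, hq'.1, hq'.2])
    · show (0:ℝ) ≤ 1; norm_num
  exact convexHull_min hsub hconv hv

theorem fApprox_eq_min_upper_facets (n : ℕ)
    (J : Type*) [Fintype J] [Nonempty J]
    (a b c d : J → ℝ)
    (hfacet : ∀ v : ℝ × ℝ × ℝ,
      v ∈ polyP n ↔ ∀ j : J, a j * v.1 + b j * v.2.1 + c j * v.2.2 ≤ d j) :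
    ∃ hS : (Finset.univ.filter (fun j : J => 0 < c j)).Nonempty,
      ∀ x₁ x₂ : ℝ, x₁ ∈ Set.Icc (0:ℝ) 1 → x₂ ∈ Set.Icc (0:ℝ) 1 →
        (Finset.univ.filter (fun j : J => 0 < c j)).inf' hS
            (fun j => (d j - a j * x₁ - b j * x₂) / c j)
          = fApprox n (x₁, x₂) := by
  have hd0 : ∀ j, (0:ℝ) ≤ d j := by
    intro j
    have h0 := (hfacet (0, 0, 0)).1 (base_mem_polyP ⟨le_refl 0, zero_le_one⟩
      ⟨le_refl 0, zero_le_one⟩) j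
    simpa using h0
  have hS : (Finset.univ.filter (fun j : J => 0 < c j)).Nonempty := by
    by_contra h
    push_neg at h
    have hc : ∀ j, c j ≤ 0 := by
      intro j
      by_contra hcj
      exact (Finset.not_nonempty_iff_eq_empty.2 h) ⟨j, Finset.mem_filter.2 ⟨Finset.mem_univ j, lt_of_not_ge hcj⟩⟩
    have hmem : ((0, 0, 2) : ℝ × ℝ × ℝ) ∈ polyP n := by
      rw [hfacet]
      intro j
      have := hc j
      have := hd0 j
      simp only
      nlinarith
    have := polyP_le_one hmem
    norm_num at this
  refine ⟨hS, fun x₁ x₂ hx₁ hx₂ => ?_⟩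
  set S := Finset.univ.filter (fun j : J => 0 < c j) with hSdef
  set Z := {z : ℝ | (x₁, x₂, z) ∈ polyP n} with hZdef
  have hZ0 : (0:ℝ) ∈ Z := base_mem_polyP hx₁ hx₂
  have hub : ∀ z ∈ Z, ∀ j ∈ S, z ≤ (d j - a j * x₁ - b j * x₂) / c j := by
    intro z hz j hj
    have hcj : 0 < c j := (Finset.mem_filter.1 hj).2
    have := (hfacet (x₁, x₂, z)).1 hz j
    rw [le_div_iff₀ hcj]
    nlinarith
  obtain ⟨j₀, hj₀⟩ := hS
  have hbdd : BddAbove Z := ⟨(d j₀ - a j₀ * x₁ - b j₀ * x₂) / c j₀,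
    fun z hz => hub z hz j₀ hj₀⟩
  set m := S.inf' hS (fun j => (d j - a j * x₁ - b j * x₂) / c j) with hm
  have h1 : sSup Z ≤ m :=
    csSup_le ⟨0, hZ0⟩ (fun z hz => Finset.le_inf' hS _ (fun j hj => hub z hz j hj))
  have hm0 : (0:ℝ) ≤ m := le_trans (le_csSup hbdd hZ0) h1
  have h2 : m ∈ Z := by
    show ((x₁, x₂, m) : ℝ × ℝ × ℝ) ∈ polyP n
    rw [hfacet]
    intro j
    simp only
    rcases lt_or_ge 0 (c j) with hcj | hcj
    · have hle : m ≤ (d j - a j * x₁ - b j * x₂) / c j :=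
        Finset.inf'_le _ (Finset.mem_filter.2 ⟨Finset.mem_univ j, hcj⟩)
      rw [le_div_iff₀ hcj] at hle
      nlinarith
    · have h0 := (hfacet (x₁, x₂, 0)).1 hZ0 j
      simp only [mul_zero, add_zero] at h0
      nlinarith
  have h3 : m ≤ sSup Z := le_csSup hbdd h2
  have : sSup Z = m := le_antisymm h1 h3
  rw [← this]
  rfl
end

section
/- Let d ∈ ℕ, let Q ⊆ (Fin d → ℝ) be a convex set, let S be a nonempty finite type, and for each j ∈ S let h_j : (Fin d → ℝ) → ℝ be an affine function (h_j x = α j + ⟪v j, x⟫ for some α j ∈ ℝ and v j : Fin d → ℝ). Define F(x) = min_{j ∈ S} h_j(x). Then for every m ∈ ℕ, every collection of weights w : Fin m → ℝ with w i ≥ 0 and ∑ i, w i = 1, and every collection of points x : Fin m → (Fin d → ℝ) with x i ∈ Q for all i, there exist weights W : S → ℝ with W j ≥ 0 and ∑ j, W j = 1 and points q : S → (Fin d → ℝ) with q j ∈ Q for all j, such that ∑ j, W j • q j = ∑ i, w i • x i and ∑ j, W j * h_j (q j) = ∑ i, w i * F (x i). -/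
theorem partition_and_merge
    (d : ℕ) (Q : Set (Fin d → ℝ)) (hQ : Convex ℝ Q)
    (S : Type*) [Fintype S] [Nonempty S]
    (h : S → (Fin d → ℝ) → ℝ) (α : S → ℝ) (v : S → (Fin d → ℝ))
    (haff : ∀ j x, h j x = α j + ∑ i, v j i * x i)
    (m : ℕ) (w : Fin m → ℝ) (hw : ∀ i, 0 ≤ w i) (hw1 : ∑ i, w i = 1)
    (x : Fin m → (Fin d → ℝ)) (hx : ∀ i, x i ∈ Q) :
    ∃ (W : S → ℝ) (q : S → (Fin d → ℝ)),
      (∀ j, 0 ≤ W j) ∧ (∑ j, W j = 1) ∧ (∀ j, q j ∈ Q) ∧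
      (∑ j, W j • q j = ∑ i, w i • x i) ∧
      (∑ j, W j * h j (q j)
        = ∑ i, w i * (Finset.univ.inf' Finset.univ_nonempty (fun j : S => h j (x i)))) := by
  classical
  have hm : 0 < m := by
    rcases Nat.eq_zero_or_pos m with hm | hm
    · subst hm; simp at hw1
    · exact hm
  set i0 : Fin m := ⟨0, hm⟩
  set F : Fin m → ℝ :=
    fun i => Finset.univ.inf' Finset.univ_nonempty (fun j : S => h j (x i)) with hF
  choose c _ hc using fun i : Fin m =>
    Finset.exists_mem_eq_inf' (Finset.univ_nonempty) (fun j : S => h j (x i))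
  set T : S → Finset (Fin m) := fun j => Finset.univ.filter (fun i => c i = j) with hT
  set W : S → ℝ := fun j => ∑ i ∈ T j, w i with hW
  have hWnn : ∀ j, 0 ≤ W j := fun j => Finset.sum_nonneg fun i _ => hw i
  have hwzero : ∀ j, W j = 0 → ∀ i ∈ T j, w i = 0 := by
    intro j hj i hi
    exact (Finset.sum_eq_zero_iff_of_nonneg (fun i _ => hw i)).mp hj i hi
  set q : S → (Fin d → ℝ) :=
    fun j => if hj : W j = 0 then x i0 else (W j)⁻¹ • ∑ i ∈ T j, w i • x i with hq
  have hkey : ∀ j, W j • q j = ∑ i ∈ T j, w i • x i := by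
    intro j
    by_cases hj : W j = 0
    · simp only [hq, dif_pos hj]
      rw [hj, zero_smul]
      symm
      exact Finset.sum_eq_zero fun i hi => by rw [hwzero j hj i hi, zero_smul]
    · simp only [hq, dif_neg hj]
      rw [smul_inv_smul₀ hj]
  have hqQ : ∀ j, q j ∈ Q := by
    intro j
    by_cases hj : W j = 0
    · simp only [hq, dif_pos hj]; exact hx i0
    · simp only [hq, dif_neg hj]
      have hmem := hQ.sum_mem (t := T j) (w := fun i => w i / W j) (z := x)
        (fun i _ => div_nonneg (hw i) (hWnn j))
        (by rw [← Finset.sum_div, div_self hj])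
        (fun i _ => hx i)
      convert hmem using 1
      rw [Finset.smul_sum]
      refine Finset.sum_congr rfl fun i _ => ?_
      simp [smul_smul, div_eq_inv_mul]
  have hqk : ∀ j k, W j * q j k = ∑ i ∈ T j, w i * x i k := by
    intro j k
    have := congrFun (hkey j) k
    simpa [Finset.sum_apply] using this
  have hsum2 : ∀ j, W j * h j (q j) = ∑ i ∈ T j, w i * F i := by
    intro j
    have hFi : ∀ i ∈ T j, F i = h j (x i) := by
      intro i hi
      have hcj : c i = j := (Finset.mem_filter.mp hi).2
      rw [hF]
      simpa [hcj] using hc i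
    calc W j * h j (q j)
        = W j * α j + ∑ k, v j k * (W j * q j k) := by
          rw [haff, mul_add, Finset.mul_sum]
          congr 1
          exact Finset.sum_congr rfl fun k _ => by ring
      _ = ∑ i ∈ T j, w i * α j + ∑ k, ∑ i ∈ T j, v j k * (w i * x i k) := by
          rw [← Finset.sum_mul, mul_comm]
          congr 1
          refine Finset.sum_congr rfl fun k _ => ?_
          rw [hqk, Finset.mul_sum]
      _ = ∑ i ∈ T j, w i * α j + ∑ i ∈ T j, ∑ k, v j k * (w i * x i k) := by
          rw [Finset.sum_comm]
      _ = ∑ i ∈ T j, (w i * α j + ∑ k, v j k * (w i * x i k)) := by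
          rw [Finset.sum_add_distrib]
      _ = ∑ i ∈ T j, w i * h j (x i) := by
          refine Finset.sum_congr rfl fun i _ => ?_
          rw [haff, mul_add, Finset.mul_sum]
          congr 1
          refine Finset.sum_congr rfl fun k _ => ?_
          ring
      _ = ∑ i ∈ T j, w i * F i := by
          exact Finset.sum_congr rfl fun i hi => by rw [hFi i hi]
  refine ⟨W, q, hWnn, ?_, hqQ, ?_, ?_⟩
  · rw [hW]
    calc ∑ j, ∑ i ∈ T j, w i = ∑ i, w i := by
          exact Finset.sum_fiberwise Finset.univ c w
      _ = 1 := hw1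
  · calc ∑ j, W j • q j = ∑ j, ∑ i ∈ T j, w i • x i := by
          exact Finset.sum_congr rfl fun j _ => hkey j
      _ = ∑ i, w i • x i := Finset.sum_fiberwise Finset.univ c _
  · calc ∑ j, W j * h j (q j) = ∑ j, ∑ i ∈ T j, w i * F i := by
          exact Finset.sum_congr rfl fun j _ => hsum2 j
      _ = ∑ i, w i * F i := Finset.sum_fiberwise Finset.univ c _
end

section
/- Let d ∈ ℕ, let Q ⊆ (Fin d → ℝ) be a nonempty, convex, bounded set, let S be a nonempty finite type, and for each j ∈ S let h_j : (Fin d → ℝ) → ℝ be an affine function. Define F(x) = min_{j ∈ S} h_j(x). Then for every p ∈ Q, the infimum of ∑ i, w i * F (x i) over all m ∈ ℕ, weights w : Fin m → ℝ with w i ≥ 0 and ∑ i, w i = 1, and points x : Fin m → (Fin d → ℝ) with x i ∈ Q for all i and ∑ i, w i • x i = p, is equal to the infimum of ∑ j, W j * h_j (q j) over all weights W : S → ℝ with W j ≥ 0 and ∑ j, W j = 1 and points q : S → (Fin d → ℝ) with q j ∈ Q for all j and ∑ j, W j • q j = p. -/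
theorem min_of_facet_objective_eq
    (d : ℕ) (Q : Set (Fin d → ℝ)) (hQne : Q.Nonempty) (hQ : Convex ℝ Q)
    (hQb : Bornology.IsBounded Q)
    (S : Type*) [Fintype S] [Nonempty S]
    (h : S → (Fin d → ℝ) → ℝ) (α : S → ℝ) (v : S → (Fin d → ℝ))
    (haff : ∀ j x, h j x = α j + ∑ i, v j i * x i)
    (p : Fin d → ℝ) (hp : p ∈ Q) :
    sInf {t : ℝ | ∃ (m : ℕ) (w : Fin m → ℝ) (x : Fin m → (Fin d → ℝ)),
        (∀ i, 0 ≤ w i) ∧ (∑ i, w i = 1) ∧ (∀ i, x i ∈ Q) ∧ (∑ i, w i • x i = p) ∧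
        t = ∑ i, w i * (Finset.univ.inf' Finset.univ_nonempty (fun j : S => h j (x i)))}
      = sInf {t : ℝ | ∃ (W : S → ℝ) (q : S → (Fin d → ℝ)),
        (∀ j, 0 ≤ W j) ∧ (∑ j, W j = 1) ∧ (∀ j, q j ∈ Q) ∧ (∑ j, W j • q j = p) ∧
        t = ∑ j, W j * h j (q j)} := by
  classical
  obtain ⟨M, hM⟩ := isBounded_iff_forall_norm_le.mp hQb
  set F : (Fin d → ℝ) → ℝ :=
    fun x => Finset.univ.inf' Finset.univ_nonempty (fun j : S => h j x) with hF
  set A : Set ℝ := {t : ℝ | ∃ (m : ℕ) (w : Fin m → ℝ) (x : Fin m → (Fin d → ℝ)),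
        (∀ i, 0 ≤ w i) ∧ (∑ i, w i = 1) ∧ (∀ i, x i ∈ Q) ∧ (∑ i, w i • x i = p) ∧
        t = ∑ i, w i * F (x i)} with hA
  set B : Set ℝ := {t : ℝ | ∃ (W : S → ℝ) (q : S → (Fin d → ℝ)),
        (∀ j, 0 ≤ W j) ∧ (∑ j, W j = 1) ∧ (∀ j, q j ∈ Q) ∧ (∑ j, W j • q j = p) ∧
        t = ∑ j, W j * h j (q j)} with hB
  -- lower bound for h on Q
  set L : S → ℝ := fun j => α j - ∑ k, |v j k| * M with hL
  have hhL : ∀ j, ∀ x ∈ Q, L j ≤ h j x := by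
    intro j x hx
    have hb : |∑ k, v j k * x k| ≤ ∑ k, |v j k| * M := by
      calc |∑ k, v j k * x k| ≤ ∑ k, |v j k * x k| := Finset.abs_sum_le_sum_abs _ _
        _ ≤ ∑ k, |v j k| * M := by
          apply Finset.sum_le_sum
          intro k _
          rw [abs_mul]
          apply mul_le_mul_of_nonneg_left _ (abs_nonneg _)
          calc |x k| = ‖x k‖ := rfl
            _ ≤ ‖x‖ := norm_le_pi_norm x k
            _ ≤ M := hM x hx
    rw [haff, hL]
    have := neg_abs_le (∑ k, v j k * x k)
    simp only
    linarith
  set L0 : ℝ := Finset.univ.inf' Finset.univ_nonempty L with hL0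
  have hFL : ∀ x ∈ Q, L0 ≤ F x := by
    intro x hx
    apply Finset.le_inf'
    intro j _
    exact le_trans (Finset.inf'_le L (Finset.mem_univ j)) (hhL j x hx)
  have hFle : ∀ j x, F x ≤ h j x := fun j x =>
    Finset.inf'_le (fun j : S => h j x) (Finset.mem_univ j)
  -- A bounded below
  have hAbdd : BddBelow A := by
    refine ⟨L0, ?_⟩
    rintro t ⟨m, w, x, hw, hw1, hxQ, -, rfl⟩
    have : ∀ i ∈ Finset.univ, w i * L0 ≤ w i * F (x i) := fun i _ =>
      mul_le_mul_of_nonneg_left (hFL (x i) (hxQ i)) (hw i)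
    calc L0 = ∑ i, w i * L0 := by rw [← Finset.sum_mul, hw1, one_mul]
      _ ≤ ∑ i, w i * F (x i) := Finset.sum_le_sum this
  have hBbdd : BddBelow B := by
    refine ⟨L0, ?_⟩
    rintro t ⟨W, q, hW, hW1, hqQ, -, rfl⟩
    have : ∀ j ∈ Finset.univ, W j * L0 ≤ W j * h j (q j) := fun j _ =>
      mul_le_mul_of_nonneg_left
        (le_trans (Finset.inf'_le L (Finset.mem_univ j)) (hhL j (q j) (hqQ j))) (hW j)
    calc L0 = ∑ j, W j * L0 := by rw [← Finset.sum_mul, hW1, one_mul]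
      _ ≤ ∑ j, W j * h j (q j) := Finset.sum_le_sum this
  -- B nonempty
  have hBne : B.Nonempty := by
    refine ⟨∑ j : S, ((Fintype.card S : ℝ))⁻¹ * h j p,
      fun _ => ((Fintype.card S : ℝ))⁻¹, fun _ => p, ?_, ?_, fun _ => hp, ?_, rfl⟩
    · intro j; positivity
    · have hc : (Fintype.card S : ℝ) ≠ 0 := Nat.cast_ne_zero.mpr Fintype.card_ne_zero
      rw [Finset.sum_const, nsmul_eq_mul, Finset.card_univ, mul_inv_cancel₀ hc]
    · have hc : (Fintype.card S : ℝ) ≠ 0 := Nat.cast_ne_zero.mpr Fintype.card_ne_zero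
      rw [← Finset.sum_smul, Finset.sum_const, nsmul_eq_mul, Finset.card_univ,
        mul_inv_cancel₀ hc, one_smul]
  -- A ⊆ B (every value of A is attained in B, via grouping by argmin)
  have hAB : A ⊆ B := by
    rintro t ⟨m, w, x, hw, hw1, hxQ, hxp, rfl⟩
    -- choose argmin
    have hc : ∀ i, ∃ j : S, F (x i) = h j (x i) := by
      intro i
      obtain ⟨j, -, hj⟩ := Finset.exists_mem_eq_inf' Finset.univ_nonempty
        (fun j : S => h j (x i))
      exact ⟨j, hj⟩
    choose c hcmin using hc
    set fib : S → Finset (Fin m) := fun j => Finset.univ.filter (fun i => c i = j) with hfib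
    set W : S → ℝ := fun j => ∑ i ∈ fib j, w i with hWdef
    have hWnn : ∀ j, 0 ≤ W j := fun j => Finset.sum_nonneg fun i _ => hw i
    have hW1 : ∑ j, W j = 1 := by
      rw [hWdef, ← hw1]
      exact Finset.sum_fiberwise Finset.univ c w
    have hwz : ∀ j, W j = 0 → ∀ i ∈ fib j, w i = 0 := by
      intro j hj i hi
      exact (Finset.sum_eq_zero_iff_of_nonneg (fun i _ => hw i)).mp hj i hi
    set q : S → (Fin d → ℝ) := fun j =>
      if W j = 0 then p else (W j)⁻¹ • ∑ i ∈ fib j, w i • x i with hqdef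
    have hqQ : ∀ j, q j ∈ Q := by
      intro j
      rw [hqdef]
      by_cases hj : W j = 0
      · simp [hj, hp]
      · simp only [hj, if_false]
        rw [Finset.smul_sum]
        have : ∀ i ∈ fib j, (W j)⁻¹ • (w i • x i) = ((W j)⁻¹ * w i) • x i := by
          intro i _; rw [smul_smul]
        rw [Finset.sum_congr rfl this]
        apply hQ.sum_mem
        · intro i _
          exact mul_nonneg (inv_nonneg.mpr (hWnn j)) (hw i)
        · rw [← Finset.mul_sum]
          exact inv_mul_cancel₀ hj
        · intro i _; exact hxQ i
    have hkey : ∀ j, W j • q j = ∑ i ∈ fib j, w i • x i := by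
      intro j
      rw [hqdef]
      by_cases hj : W j = 0
      · simp only [hj, if_true, zero_smul]
        symm
        apply Finset.sum_eq_zero
        intro i hi
        rw [hwz j hj i hi, zero_smul]
      · simp only [hj, if_false]
        rw [smul_inv_smul₀ hj]
    have hqp : ∑ j, W j • q j = p := by
      rw [Finset.sum_congr rfl (fun j _ => hkey j), ← hxp]
      exact Finset.sum_fiberwise Finset.univ c (fun i => w i • x i)
    refine ⟨W, q, hWnn, hW1, hqQ, hqp, ?_⟩
    -- value equality
    have hval : ∀ j, W j * h j (q j) = ∑ i ∈ fib j, w i * h j (x i) := by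
      intro j
      have hWq : ∀ k, W j * q j k = ∑ i ∈ fib j, w i * x i k := by
        intro k
        have := congrFun (hkey j) k
        simpa [Finset.sum_apply] using this
      rw [haff, mul_add, Finset.mul_sum]
      have : ∀ k ∈ Finset.univ, W j * (v j k * q j k) = ∑ i ∈ fib j, v j k * (w i * x i k) := by
        intro k _
        rw [← Finset.mul_sum, ← hWq k]; ring
      rw [Finset.sum_congr rfl this, Finset.sum_comm, hWdef, Finset.sum_mul]
      rw [← Finset.sum_add_distrib]
      apply Finset.sum_congr rfl
      intro i _
      rw [haff, mul_add, Finset.mul_sum]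
      congr 1
      apply Finset.sum_congr rfl
      intro k _
      ring
    calc ∑ i, w i * F (x i) = ∑ i, w i * h (c i) (x i) := by
          apply Finset.sum_congr rfl
          intro i _
          rw [hcmin i]
      _ = ∑ j, ∑ i ∈ fib j, w i * h j (x i) := by
          rw [← Finset.sum_fiberwise Finset.univ c (fun i => w i * h (c i) (x i))]
          apply Finset.sum_congr rfl
          intro j _
          apply Finset.sum_congr rfl
          intro i hi
          rw [(Finset.mem_filter.mp hi).2]
      _ = ∑ j, W j * h j (q j) := by
          apply Finset.sum_congr rfl
          intro j _
          rw [hval j]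
  -- every element of B is dominated by an element of A
  have hBA : ∀ t ∈ B, ∃ s ∈ A, s ≤ t := by
    rintro t ⟨W, q, hW, hW1, hqQ, hqp, rfl⟩
    set e := (Fintype.equivFin S).symm
    refine ⟨∑ i, W (e i) * F (q (e i)), ⟨Fintype.card S, fun i => W (e i),
      fun i => q (e i), fun i => hW (e i), ?_, fun i => hqQ (e i), ?_, rfl⟩, ?_⟩
    · rw [Fintype.sum_equiv e _ W (fun i => rfl)]; exact hW1
    · rw [Fintype.sum_equiv e _ (fun j => W j • q j) (fun i => rfl)]; exact hqp
    · rw [Fintype.sum_equiv e _ (fun j => W j * F (q j)) (fun i => rfl)]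
      apply Finset.sum_le_sum
      intro j _
      exact mul_le_mul_of_nonneg_left (hFle j (q j)) (hW j)
  obtain ⟨t0, ht0⟩ := hBne
  obtain ⟨s0, hs0, -⟩ := hBA t0 ht0
  have hAne : A.Nonempty := ⟨s0, hs0⟩
  apply le_antisymm
  · apply le_csInf ⟨t0, ht0⟩
    intro b hb
    obtain ⟨s, hs, hsb⟩ := hBA b hb
    exact le_trans (csInf_le hAbdd hs) hsb
  · exact csInf_le_csInf hBbdd hAne hAB
end

section
/- Let ε ∈ ℝ with 0 < ε < 1, let n ∈ ℕ with n ≥ 1, let F ∈ ℝ with F ≥ 0, and set δ = ε^n / (ε^n + (1−ε)^n). Then F ≤ ε / (1−ε) if and only if (1/2) * (1 − (1−δ) * (1 − F^n)) ≤ δ. -/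
theorem necessary_condition_iff
    (ε : ℝ) (hε₀ : 0 < ε) (hε₁ : ε < 1) (n : ℕ) (hn : 1 ≤ n)
    (F : ℝ) (hF : 0 ≤ F) :
    F ≤ ε / (1 - ε) ↔
      (1 / 2) * (1 - (1 - ε ^ n / (ε ^ n + (1 - ε) ^ n)) * (1 - F ^ n))
        ≤ ε ^ n / (ε ^ n + (1 - ε) ^ n) := by
  have h1 : (0:ℝ) < 1 - ε := by linarith
  have ha : 0 < ε ^ n := pow_pos hε₀ n
  have hb : 0 < (1 - ε) ^ n := pow_pos h1 n
  have hab : 0 < ε ^ n + (1 - ε) ^ n := by linarith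
  have key : F ≤ ε / (1 - ε) ↔ F ^ n ≤ (ε / (1 - ε)) ^ n :=
    (pow_le_pow_iff_left₀ hF (by positivity) (by omega)).symm
  have h2 : (1 / 2 : ℝ) * (1 - (1 - ε ^ n / (ε ^ n + (1 - ε) ^ n)) * (1 - F ^ n))
      = (ε ^ n + (1 - ε) ^ n * F ^ n) / (2 * (ε ^ n + (1 - ε) ^ n)) := by
    field_simp
    ring
  rw [key, div_pow, le_div_iff₀ hb, h2,
    div_le_div_iff₀ (by positivity) hab]
  constructor <;> intro h <;> nlinarith [h, hab]
end
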